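/- (A good rectangle.) Let μ be a Radon measure on ℝ^N, r_0 > 0, K compact with μ(K) > 0, and fix integers 0 ≤ N_0 < N and parameters L ≥ 8 and σ ∈ (0, 1/2). For x ∈ ℝ^N and r > 0 define the rectangle E(x,r) = x + [−L²r/2, L²r/2]^{N_0} × [−2r, 2r]^{N−N_0} and the core S(x,r) = x + [−L²r/2 + Lr/2, L²r/2 − Lr/2]^{N_0} × [−2σr, 2σr]^{N−N_0}. Then there exist x ∈ K and 0 < r ≤ r_0 such that μ(S(x,r)) ≥ σ^{N−N_0} · (1/3) · 2^{−2N−N_0−1} · (1 + 1/6)^{−1} · μ(E(x,r)) > 0. -/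

import Mathlib

open MeasureTheory Metric Set Filter
open scoped ENNReal NNReal Topology

namespace GoodRectAux

variable {N₀ N₁ : ℕ}

/-- An axis-parallel box in the product space. -/
def Box (z : (Fin N₀ → ℝ) × (Fin N₁ → ℝ)) (p q : ℝ) : Set ((Fin N₀ → ℝ) × (Fin N₁ → ℝ)) :=
  {y | (∀ i, |y.1 i - z.1 i| ≤ p) ∧ (∀ i, |y.2 i - z.2 i| ≤ q)}

lemma measurableSet_box (z : (Fin N₀ → ℝ) × (Fin N₁ → ℝ)) (p q : ℝ) :
    MeasurableSet (Box z p q) := by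
  have h1 : Box z p q =
      (⋂ i, {y : (Fin N₀ → ℝ) × (Fin N₁ → ℝ) | |y.1 i - z.1 i| ≤ p}) ∩
      (⋂ i, {y : (Fin N₀ → ℝ) × (Fin N₁ → ℝ) | |y.2 i - z.2 i| ≤ q}) := by
    ext y; simp [Box, Set.mem_iInter, Set.mem_setOf_eq]
  rw [h1]
  refine MeasurableSet.inter (MeasurableSet.iInter fun i => ?_)
    (MeasurableSet.iInter fun i => ?_)
  · exact measurableSet_le ((((measurable_pi_apply i).comp measurable_fst).sub
      measurable_const).abs) measurable_const
  · exact measurableSet_le ((((measurable_pi_apply i).comp measurable_snd).sub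
      measurable_const).abs) measurable_const

lemma mem_closedBall_iff' {x y : (Fin N₀ → ℝ) × (Fin N₁ → ℝ)} {r : ℝ} (hr : 0 ≤ r) :
    y ∈ closedBall x r ↔ (∀ i, |y.1 i - x.1 i| ≤ r) ∧ (∀ i, |y.2 i - x.2 i| ≤ r) := by
  rw [mem_closedBall, Prod.dist_eq, max_le_iff, dist_pi_le_iff hr, dist_pi_le_iff hr]
  simp [Real.dist_eq]

lemma cover_bound (μ : Measure ((Fin N₀ → ℝ) × (Fin N₁ → ℝ)))
    (A : Set ((Fin N₀ → ℝ) × (Fin N₁ → ℝ))) (R ρ : ℝ) (hR : 0 ≤ R) (hρ : 0 < ρ)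
    (hA : A ⊆ closedBall 0 R) (C : ℝ≥0∞)
    (hC : ∀ x ∈ A, μ (closedBall x ρ) ≤ C) :
    μ A ≤ ENNReal.ofReal ((2 * R / ρ + 3) ^ (N₀ + N₁)) * C := by
  classical
  set c : ℤ := ⌈R / ρ⌉ with hc
  have hc0 : 0 ≤ c := Int.ceil_nonneg (by positivity)
  set J : Finset ℤ := Finset.Icc (-c) c with hJ
  set idx : (Fin N₀ → ℝ) × (Fin N₁ → ℝ) → (Fin N₀ → ℤ) × (Fin N₁ → ℤ) :=
    fun y => (fun i => ⌊y.1 i / ρ⌋, fun i => ⌊y.2 i / ρ⌋) with hidx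
  set I : Finset ((Fin N₀ → ℤ) × (Fin N₁ → ℤ)) :=
    (Fintype.piFinset fun _ : Fin N₀ => J) ×ˢ (Fintype.piFinset fun _ : Fin N₁ => J) with hI
  -- coordinates of points of A are bounded
  have hcoord : ∀ y ∈ A, (∀ i, |y.1 i| ≤ R) ∧ (∀ i, |y.2 i| ≤ R) := by
    intro y hy
    have := (mem_closedBall_iff' hR).1 (hA hy)
    simpa using this
  have hfloor : ∀ a : ℝ, |a| ≤ R → ⌊a / ρ⌋ ∈ J := by
    intro a ha
    rw [hJ, Finset.mem_Icc]
    constructor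
    · have h1 : -(R / ρ) ≤ a / ρ := by
        rw [neg_le, ← neg_div]
        exact div_le_div_of_nonneg_right (by linarith [abs_le.1 ha]) hρ.le |>.trans_eq rfl
      calc -c = ⌊-(R/ρ)⌋ := by rw [Int.floor_neg]
        _ ≤ ⌊a / ρ⌋ := Int.floor_mono h1
    · have h1 : a / ρ ≤ R / ρ := div_le_div_of_nonneg_right (abs_le.1 ha).2 hρ.le
      exact (Int.floor_mono h1).trans (Int.floor_le_ceil _)
  have hmemI : ∀ y ∈ A, idx y ∈ I := by
    intro y hy
    rw [hI, Finset.mem_product]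
    refine ⟨Fintype.mem_piFinset.2 fun i => hfloor _ ((hcoord y hy).1 i),
      Fintype.mem_piFinset.2 fun i => hfloor _ ((hcoord y hy).2 i)⟩
  have hsub : A ⊆ ⋃ v ∈ I, {y ∈ A | idx y = v} := by
    intro y hy
    exact Set.mem_biUnion (hmemI y hy) ⟨hy, rfl⟩
  have hsum : μ A ≤ ∑ v ∈ I, μ {y ∈ A | idx y = v} :=
    (measure_mono hsub).trans (measure_biUnion_finset_le I _)
  -- each piece has measure at most C
  have hpiece : ∀ v ∈ I, μ {y ∈ A | idx y = v} ≤ C := by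
    intro v _
    have key : ∀ a b : ℝ, ⌊a / ρ⌋ = ⌊b / ρ⌋ → |a - b| ≤ ρ := by
      intro a b hab
      have h1 : |a / ρ - b / ρ| < 1 := Int.abs_sub_lt_one_of_floor_eq_floor hab
      have h2 : a / ρ - b / ρ = (a - b) / ρ := by ring
      rw [h2, abs_div, abs_of_pos hρ, div_lt_one hρ] at h1
      exact h1.le
    rcases Set.eq_empty_or_nonempty {y ∈ A | idx y = v} with h | ⟨x₀, hx₀A, hx₀v⟩
    · simp [h]
    · have hsub2 : {y ∈ A | idx y = v} ⊆ closedBall x₀ ρ := by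
        rintro y ⟨hyA, hyv⟩
        have hv : idx y = idx x₀ := hyv.trans hx₀v.symm
        have h1 : ∀ i, ⌊y.1 i / ρ⌋ = ⌊x₀.1 i / ρ⌋ := fun i =>
          congrFun (congrArg Prod.fst hv) i
        have h2 : ∀ i, ⌊y.2 i / ρ⌋ = ⌊x₀.2 i / ρ⌋ := fun i =>
          congrFun (congrArg Prod.snd hv) i
        rw [mem_closedBall_iff' hρ.le]
        exact ⟨fun i => key _ _ (h1 i), fun i => key _ _ (h2 i)⟩
      exact (measure_mono hsub2).trans (hC x₀ hx₀A)
  have hcard : μ A ≤ (I.card : ℝ≥0∞) * C := by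
    calc μ A ≤ ∑ v ∈ I, μ {y ∈ A | idx y = v} := hsum
      _ ≤ I.card • C := Finset.sum_le_card_nsmul _ _ _ hpiece
      _ = (I.card : ℝ≥0∞) * C := by rw [nsmul_eq_mul]
  -- card bound
  have hJcard : (J.card : ℝ) ≤ 2 * R / ρ + 3 := by
    have h1 : J.card = (c + 1 - -c).toNat := Int.card_Icc _ _
    have h2 : ((c + 1 - -c).toNat : ℝ) = 2 * (c : ℝ) + 1 := by
      have e : c + 1 - -c = 2 * c + 1 := by ring
      rw [e, show ((2 * c + 1).toNat : ℝ) = (((2 * c + 1).toNat : ℤ) : ℝ) by push_cast; ring,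
        Int.toNat_of_nonneg (by omega)]
      push_cast; ring
    have h3 : (c : ℝ) < R / ρ + 1 := Int.ceil_lt_add_one _
    rw [h1, h2]
    push_cast
    have : 2 * R / ρ = 2 * (R / ρ) := by ring
    rw [this]
    linarith
  have hIcard : (I.card : ℝ≥0∞) ≤ ENNReal.ofReal ((2 * R / ρ + 3) ^ (N₀ + N₁)) := by
    have h1 : I.card = J.card ^ (N₀ + N₁) := by
      rw [hI, Finset.card_product, Fintype.card_piFinset, Fintype.card_piFinset]
      simp [Finset.prod_const, pow_add]
    rw [h1]
    rw [← ENNReal.ofReal_natCast]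
    apply ENNReal.ofReal_le_ofReal
    push_cast
    exact pow_le_pow_left₀ (by positivity) hJcard _
  exact hcard.trans (mul_le_mul_left hIcard C)
lemma slab_coord {t : ℝ} (ht : 0 < t) {M : ℕ} (hM : 0 < M) {d : ℝ} (hd : |d| ≤ t) :
    |d - (-t + (2 * (min (M - 1) ⌊(d + t) * M / (2 * t)⌋₊ : ℕ) + 1) * (t / M))| ≤ t / M := by
  have hMr : (0 : ℝ) < M := by exact_mod_cast hM
  have hMne : (M : ℝ) ≠ 0 := ne_of_gt hMr
  have e1 : t / M * M = t := div_mul_cancel₀ _ hMne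
  have hd1 := abs_le.1 hd
  set s : ℝ := (d + t) * M / (2 * t) with hs
  have hs0 : 0 ≤ s := by
    apply div_nonneg _ (by linarith)
    have : 0 ≤ d + t := by linarith
    positivity
  by_cases hcase : ⌊s⌋₊ ≤ M - 1
  · have hj : min (M - 1) ⌊s⌋₊ = ⌊s⌋₊ := min_eq_right hcase
    rw [hj]
    set j := ⌊s⌋₊ with hjdef
    have h1 : (j : ℝ) ≤ s := Nat.floor_le hs0
    have h2 : s < j + 1 := Nat.lt_floor_add_one s
    rw [hs, le_div_iff₀ (by linarith)] at h1
    rw [hs, div_lt_iff₀ (by linarith)] at h2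
    rw [abs_le]
    constructor
    · nlinarith [e1, h1]
    · nlinarith [e1, h2]
  · push_neg at hcase
    have hMle : M ≤ ⌊s⌋₊ := by omega
    have hsM : (M : ℝ) ≤ s := le_trans (by exact_mod_cast hMle) (Nat.floor_le hs0)
    have hdt : d = t := by
      rw [hs, le_div_iff₀ (by linarith)] at hsM
      nlinarith [hsM]
    have hj : min (M - 1) ⌊s⌋₊ = M - 1 := min_eq_left (by omega)
    rw [hj, hdt]
    have hcast : ((M - 1 : ℕ) : ℝ) = (M : ℝ) - 1 := by
      have : (1:ℕ) ≤ M := hM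
      push_cast [Nat.cast_sub this]; ring
    have hval : t - (-t + (2 * ((M - 1 : ℕ) : ℝ) + 1) * (t / M)) = t / M := by
      rw [hcast]; field_simp; ring
    rw [hval, abs_of_nonneg (by positivity)]
/-- The set of points near which the measure fails to be doubling (for the factor
`D = 2^(2N+1)` and scale jumps `4`) at every scale `t₀ 4^{-k}`, `k ≥ n`, is null. -/
lemma bad_null (μ : Measure ((Fin N₀ → ℝ) × (Fin N₁ → ℝ))) [IsLocallyFiniteMeasure μ]
    (K : Set ((Fin N₀ → ℝ) × (Fin N₁ → ℝ))) (hK : IsCompact K)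
    (t₀ : ℝ) (ht₀ : 0 < t₀) (n : ℕ) :
    μ {x | x ∈ K ∧ ∀ k, n ≤ k →
      μ (closedBall x (t₀ * (4:ℝ)⁻¹ ^ (k+1))) <
        ((2:ℝ≥0∞) ^ (2*(N₀+N₁)+1))⁻¹ * μ (closedBall x (t₀ * (4:ℝ)⁻¹ ^ k))} = 0 := by
  set D : ℝ≥0∞ := (2:ℝ≥0∞) ^ (2*(N₀+N₁)+1) with hD
  have hD0 : D ≠ 0 := by rw [hD]; exact pow_ne_zero _ (by norm_num)
  have hDtop : D ≠ ⊤ := by rw [hD]; exact ENNReal.pow_ne_top ENNReal.ofNat_ne_top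
  set B := {x | x ∈ K ∧ ∀ k, n ≤ k →
      μ (closedBall x (t₀ * (4:ℝ)⁻¹ ^ (k+1))) < D⁻¹ * μ (closedBall x (t₀ * (4:ℝ)⁻¹ ^ k))}
    with hB
  set M₀ : ℝ≥0∞ := μ (Metric.cthickening t₀ K) with hM₀
  have hM₀top : M₀ ≠ ⊤ := ((hK.cthickening).measure_lt_top).ne
  obtain ⟨R', hR'⟩ := (hK.isBounded).subset_closedBall 0
  set R := max R' 0 with hRdef
  have hKR : K ⊆ closedBall 0 R :=
    hR'.trans (closedBall_subset_closedBall (le_max_left _ _))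
  have hR : 0 ≤ R := le_max_right _ _
  -- decay of measures of balls around bad points
  have hdecay : ∀ x ∈ B, ∀ k, n ≤ k →
      μ (closedBall x (t₀ * (4:ℝ)⁻¹ ^ k)) ≤ D ^ n * (D⁻¹) ^ k * M₀ := by
    intro x hx
    refine Nat.le_induction ?_ ?_
    · have h1 : closedBall x (t₀ * (4:ℝ)⁻¹ ^ n) ⊆ Metric.cthickening t₀ K := by
        refine subset_trans (closedBall_subset_closedBall ?_)
          (closedBall_subset_cthickening hx.1 t₀)
        calc t₀ * (4:ℝ)⁻¹ ^ n ≤ t₀ * 1 := by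
              apply mul_le_mul_of_nonneg_left _ ht₀.le
              exact pow_le_one₀ (by norm_num) (by norm_num)
          _ = t₀ := mul_one _
      have h2 : D ^ n * (D⁻¹) ^ n = 1 := by
        rw [← ENNReal.inv_pow, ENNReal.mul_inv_cancel (pow_ne_zero _ hD0)
          (ENNReal.pow_ne_top hDtop)]
      calc μ (closedBall x (t₀ * (4:ℝ)⁻¹ ^ n)) ≤ M₀ := measure_mono h1
        _ = D ^ n * (D⁻¹) ^ n * M₀ := by rw [h2, one_mul]
    · intro k hk ih
      calc μ (closedBall x (t₀ * (4:ℝ)⁻¹ ^ (k+1)))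
          ≤ D⁻¹ * μ (closedBall x (t₀ * (4:ℝ)⁻¹ ^ k)) := (hx.2 k hk).le
        _ ≤ D⁻¹ * (D ^ n * (D⁻¹) ^ k * M₀) := mul_le_mul_right ih _
        _ = D ^ n * (D⁻¹) ^ (k+1) * M₀ := by ring
  -- apply the covering bound at scale `t₀ 4^{-k}`
  set E₀ : ℝ≥0∞ := ENNReal.ofReal ((2*R/t₀+3)^(N₀+N₁)) * (D ^ n * M₀) with hE₀
  have hbound : ∀ k, n ≤ k → μ B ≤ E₀ * (2⁻¹ : ℝ≥0∞) ^ k := by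
    intro k hk
    have hρ : 0 < t₀ * (4:ℝ)⁻¹ ^ k := by positivity
    have hcov := cover_bound μ B R (t₀ * (4:ℝ)⁻¹ ^ k) hR hρ
      (subset_trans (fun x hx => hx.1) hKR) (D ^ n * (D⁻¹) ^ k * M₀)
      (fun x hx => hdecay x hx k hk)
    have h4k : (1:ℝ) ≤ 4 ^ k := one_le_pow₀ (by norm_num)
    have hreal : (2*R/(t₀ * (4:ℝ)⁻¹ ^ k)+3)^(N₀+N₁)
        ≤ (4:ℝ)^(k*(N₀+N₁)) * (2*R/t₀+3)^(N₀+N₁) := by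
      have e : 2*R/(t₀ * (4:ℝ)⁻¹ ^ k) = (2*R/t₀) * 4 ^ k := by
        rw [inv_pow]; field_simp
      have hRt : (0:ℝ) ≤ 2*R/t₀ := by positivity
      have h1 : 2*R/(t₀ * (4:ℝ)⁻¹ ^ k)+3 ≤ (4:ℝ)^k * (2*R/t₀+3) := by
        rw [e]; nlinarith
      calc (2*R/(t₀ * (4:ℝ)⁻¹ ^ k)+3)^(N₀+N₁)
          ≤ ((4:ℝ)^k * (2*R/t₀+3))^(N₀+N₁) := by
            apply pow_le_pow_left₀ _ h1
            positivity
        _ = (4:ℝ)^(k*(N₀+N₁)) * (2*R/t₀+3)^(N₀+N₁) := by rw [mul_pow, ← pow_mul]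
    have hofr : ENNReal.ofReal ((2*R/(t₀ * (4:ℝ)⁻¹ ^ k)+3)^(N₀+N₁))
        ≤ (4:ℝ≥0∞)^(k*(N₀+N₁)) * ENNReal.ofReal ((2*R/t₀+3)^(N₀+N₁)) := by
      calc ENNReal.ofReal ((2*R/(t₀ * (4:ℝ)⁻¹ ^ k)+3)^(N₀+N₁))
          ≤ ENNReal.ofReal ((4:ℝ)^(k*(N₀+N₁)) * (2*R/t₀+3)^(N₀+N₁)) :=
            ENNReal.ofReal_le_ofReal hreal
        _ = ENNReal.ofReal ((4:ℝ)^(k*(N₀+N₁))) * ENNReal.ofReal ((2*R/t₀+3)^(N₀+N₁)) :=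
            ENNReal.ofReal_mul (by positivity)
        _ = (4:ℝ≥0∞)^(k*(N₀+N₁)) * ENNReal.ofReal ((2*R/t₀+3)^(N₀+N₁)) := by
            rw [ENNReal.ofReal_pow (by norm_num)]
            norm_num
    have hkey : (4:ℝ≥0∞)^(k*(N₀+N₁)) * (D⁻¹) ^ k = (2⁻¹ : ℝ≥0∞) ^ k := by
      have h2 : (4:ℝ≥0∞)^(N₀+N₁) * D⁻¹ = 2⁻¹ := by
        rw [hD, show (4:ℝ≥0∞) = 2^2 by norm_num, ← pow_mul, pow_succ,
          ENNReal.mul_inv (Or.inl (pow_ne_zero _ (by norm_num)))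
            (Or.inl (ENNReal.pow_ne_top ENNReal.ofNat_ne_top)),
          ← mul_assoc, ENNReal.mul_inv_cancel (pow_ne_zero _ (by norm_num))
            (ENNReal.pow_ne_top ENNReal.ofNat_ne_top), one_mul]
      rw [mul_comm k, pow_mul, ← mul_pow, h2]
    calc μ B ≤ ENNReal.ofReal ((2*R/(t₀ * (4:ℝ)⁻¹ ^ k)+3)^(N₀+N₁)) *
          (D ^ n * (D⁻¹) ^ k * M₀) := hcov
      _ ≤ ((4:ℝ≥0∞)^(k*(N₀+N₁)) * ENNReal.ofReal ((2*R/t₀+3)^(N₀+N₁))) *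
          (D ^ n * (D⁻¹) ^ k * M₀) := mul_le_mul_left hofr _
      _ = E₀ * ((4:ℝ≥0∞)^(k*(N₀+N₁)) * (D⁻¹) ^ k) := by rw [hE₀]; ring
      _ = E₀ * (2⁻¹ : ℝ≥0∞) ^ k := by rw [hkey]
  -- conclude
  have hE₀top : E₀ ≠ ⊤ :=
    ENNReal.mul_ne_top ENNReal.ofReal_ne_top
      (ENNReal.mul_ne_top (ENNReal.pow_ne_top hDtop) hM₀top)
  by_contra hne
  rcases eq_or_ne E₀ 0 with hE0 | hE0
  · exact hne (le_antisymm (by simpa [hE0] using hbound n le_rfl) (zero_le))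
  · have hdiv : μ B / E₀ ≠ 0 := by
      rw [div_eq_mul_inv]
      exact mul_ne_zero hne (ENNReal.inv_ne_zero.2 hE₀top)
    obtain ⟨j, hj⟩ := ENNReal.exists_inv_two_pow_lt hdiv
    have hjlt : E₀ * (2⁻¹:ℝ≥0∞) ^ j < μ B := by
      rw [mul_comm]
      exact (ENNReal.lt_div_iff_mul_lt (Or.inl hE0) (Or.inl hE₀top)).1 hj
    have hle : μ B ≤ E₀ * (2⁻¹:ℝ≥0∞) ^ j := by
      calc μ B ≤ E₀ * (2⁻¹:ℝ≥0∞) ^ (j + n) := hbound (j+n) (by omega)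
        _ = E₀ * ((2⁻¹:ℝ≥0∞) ^ j * (2⁻¹:ℝ≥0∞) ^ n) := by rw [pow_add]
        _ ≤ E₀ * ((2⁻¹:ℝ≥0∞) ^ j * 1) := by
            exact mul_le_mul_right (mul_le_mul_right (pow_le_one' (by norm_num) n) _) _
        _ = E₀ * (2⁻¹:ℝ≥0∞) ^ j := by rw [mul_one]
    exact absurd (lt_of_le_of_lt hle hjlt) (lt_irrefl _)

/-- Master lemma: a good slab around a point of `K`, in the sup-norm space. -/
theorem master (μ : Measure ((Fin N₀ → ℝ) × (Fin N₁ → ℝ))) [IsLocallyFiniteMeasure μ]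
    (K : Set ((Fin N₀ → ℝ) × (Fin N₁ → ℝ))) (hK : IsCompact K) (hμK : 0 < μ K)
    (r₀ : ℝ) (hr₀ : 0 < r₀) (M : ℕ) (hM : 0 < M) :
    ∃ z ∈ K, ∃ t : ℝ, 0 < t ∧ 3 * t ≤ r₀ ∧
      ((2:ℝ≥0∞) ^ (2*(N₀+N₁)+N₀+2) * (M:ℝ≥0∞) ^ N₁)⁻¹ * μ (closedBall z (3*t))
        ≤ μ (Box z t (2*t/M)) ∧ 0 < μ (Box z t (2*t/M)) := by
  classical
  set D : ℝ≥0∞ := (2:ℝ≥0∞) ^ (2*(N₀+N₁)+1) with hD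
  have hD0 : D ≠ 0 := pow_ne_zero _ (by norm_num)
  have hDtop : D ≠ ⊤ := ENNReal.pow_ne_top ENNReal.ofNat_ne_top
  have hKmeas : MeasurableSet K := hK.isClosed.measurableSet
  have hae := Besicovitch.ae_tendsto_measure_inter_div μ K
  set Bn : ℕ → Set ((Fin N₀ → ℝ) × (Fin N₁ → ℝ)) := fun n => {x | x ∈ K ∧ ∀ k, n ≤ k →
      μ (closedBall x (r₀ * (4:ℝ)⁻¹ ^ (k+1))) < D⁻¹ * μ (closedBall x (r₀ * (4:ℝ)⁻¹ ^ k))}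
    with hBn
  have hBnull : ∀ n, μ (Bn n) = 0 := fun n => bad_null μ K hK r₀ hr₀ n
  set Gbad : Set ((Fin N₀ → ℝ) × (Fin N₁ → ℝ)) := {x | ¬ Tendsto
      (fun r => μ (K ∩ closedBall x r) / μ (closedBall x r)) (𝓝[>] 0) (𝓝 1)} with hGbad
  have hGnull : μ.restrict K Gbad = 0 := ae_iff.1 hae
  have hbadnull : μ.restrict K (Gbad ∪ ⋃ n, Bn n) = 0 := by
    apply measure_union_null hGnull
    apply measure_iUnion_null
    intro n
    have h1 : μ.restrict K (Bn n) ≤ μ (Bn n) := by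
      rw [Measure.restrict_apply' hKmeas]
      exact measure_mono inter_subset_left
    exact le_antisymm (h1.trans (hBnull n).le) (zero_le)
  have hKpos' : 0 < μ.restrict K K := by
    rw [Measure.restrict_apply' hKmeas, inter_self]; exact hμK
  obtain ⟨x, hxK, hxgood⟩ : ∃ x ∈ K, x ∉ Gbad ∪ ⋃ n, Bn n := by
    by_contra h
    push_neg at h
    have h2 : K ⊆ Gbad ∪ ⋃ n, Bn n := fun y hy => h y hy
    have h3 := (measure_mono h2 : μ.restrict K K ≤ _)
    rw [hbadnull] at h3
    exact absurd (le_antisymm h3 (zero_le)) (ne_of_gt hKpos')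
  have htend : Tendsto (fun r => μ (K ∩ closedBall x r) / μ (closedBall x r))
      (𝓝[>] 0) (𝓝 1) := by
    have hx1 : x ∉ Gbad := fun h => hxgood (Or.inl h)
    simpa [hGbad] using hx1
  have hx2 : ∀ n, ∃ k, n ≤ k ∧
      D⁻¹ * μ (closedBall x (r₀ * (4:ℝ)⁻¹ ^ k)) ≤
        μ (closedBall x (r₀ * (4:ℝ)⁻¹ ^ (k+1))) := by
    intro n
    have hx1 : x ∉ Bn n := fun h => hxgood (Or.inr (mem_iUnion.2 ⟨n, h⟩))
    simp only [hBn, mem_setOf_eq, not_and, not_forall, not_lt, Classical.not_imp] at hx1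
    obtain ⟨k, hk, hle⟩ := hx1 hxK
    exact ⟨k, hk, hle⟩
  have hev : ∀ᶠ r in 𝓝[>] (0:ℝ),
      2⁻¹ < μ (K ∩ closedBall x r) / μ (closedBall x r) :=
    htend.eventually (eventually_gt_nhds (by norm_num))
  obtain ⟨ε, hε, hsub⟩ := mem_nhdsGT_iff_exists_Ioo_subset.1 hev
  obtain ⟨n, hn⟩ := exists_pow_lt_of_lt_one (show (0:ℝ) < ε / r₀ by
      have : (0:ℝ) < ε := hε; positivity)
    (by norm_num : (4:ℝ)⁻¹ < 1)
  have hnε : r₀ * (4:ℝ)⁻¹ ^ n < ε := (lt_div_iff₀' hr₀).1 hn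
  obtain ⟨k, hkn, hdb⟩ := hx2 n
  set t : ℝ := r₀ * (4:ℝ)⁻¹ ^ (k+1) with htdef
  have ht : 0 < t := by positivity
  have hmono : (4:ℝ)⁻¹ ^ (k+1) ≤ (4:ℝ)⁻¹ ^ n :=
    pow_le_pow_of_le_one (by norm_num) (by norm_num) (by omega)
  have htε : t < ε := lt_of_le_of_lt (mul_le_mul_of_nonneg_left hmono hr₀.le) hnε
  have h3t : 3 * t ≤ r₀ := by
    have h1 : (4:ℝ)⁻¹ ^ (k+1) ≤ (4:ℝ)⁻¹ ^ 1 :=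
      pow_le_pow_of_le_one (by norm_num) (by norm_num) (by omega)
    rw [pow_one] at h1
    nlinarith
  have h4t : r₀ * (4:ℝ)⁻¹ ^ k = 4 * t := by
    rw [htdef, pow_succ]; ring
  have hdbl : μ (closedBall x (4*t)) ≤ D * μ (closedBall x t) := by
    rw [← h4t]
    calc μ (closedBall x (r₀ * (4:ℝ)⁻¹ ^ k))
        = D * (D⁻¹ * μ (closedBall x (r₀ * (4:ℝ)⁻¹ ^ k))) := by
          rw [← mul_assoc, ENNReal.mul_inv_cancel hD0 hDtop, one_mul]
      _ ≤ D * μ (closedBall x t) := mul_le_mul_right hdb _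
  have hrat : 2⁻¹ < μ (K ∩ closedBall x t) / μ (closedBall x t) := hsub ⟨ht, htε⟩
  have hfin : μ (closedBall x t) ≠ ⊤ := by
    have hsub2 : closedBall x t ⊆ Metric.cthickening r₀ K :=
      subset_trans (closedBall_subset_closedBall (by nlinarith))
        (closedBall_subset_cthickening hxK r₀)
    exact ne_top_of_le_ne_top (hK.cthickening.measure_lt_top).ne (measure_mono hsub2)
  have hb0 : μ (closedBall x t) ≠ 0 := by
    intro h0
    have h1 : μ (K ∩ closedBall x t) = 0 :=
      le_antisymm ((measure_mono inter_subset_right).trans h0.le) (zero_le)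
    rw [h0, h1] at hrat
    simp at hrat
  have hden : μ (closedBall x t) ≤ 2 * μ (K ∩ closedBall x t) := by
    have h1 : 2⁻¹ * μ (closedBall x t) < μ (K ∩ closedBall x t) :=
      (ENNReal.lt_div_iff_mul_lt (Or.inl hb0) (Or.inl hfin)).1 hrat
    calc μ (closedBall x t) = 2 * (2⁻¹ * μ (closedBall x t)) := by
          rw [← mul_assoc, ENNReal.mul_inv_cancel (by norm_num) (by norm_num), one_mul]
      _ ≤ 2 * μ (K ∩ closedBall x t) := mul_le_mul_right h1.le _
  -- the slabs
  haveI : Nonempty (Fin M) := ⟨⟨0, hM⟩⟩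
  have hMr : (0:ℝ) < M := by exact_mod_cast hM
  have hMne : (M:ℝ) ≠ 0 := ne_of_gt hMr
  set ctr : (Fin N₀ → Fin 2) × (Fin N₁ → Fin M) → (Fin N₀ → ℝ) × (Fin N₁ → ℝ) :=
    fun j => (fun i => x.1 i + (if j.1 i = 0 then -(t/2) else t/2),
              fun i => x.2 i + (-t + (2 * ((j.2 i : ℕ) : ℝ) + 1) * (t / M))) with hctr
  set T : (Fin N₀ → Fin 2) × (Fin N₁ → Fin M) → Set ((Fin N₀ → ℝ) × (Fin N₁ → ℝ)) :=
    fun j => Box (ctr j) (t/2) (t/M) with hT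
  have hctr1 : ∀ j i, |(ctr j).1 i - x.1 i| ≤ t/2 := by
    intro j i
    by_cases hji : j.1 i = 0
    · have h1 : (ctr j).1 i - x.1 i = -(t/2) := by simp only [hctr, if_pos hji]; ring
      rw [h1, abs_neg, abs_of_nonneg (by positivity)]
    · have h1 : (ctr j).1 i - x.1 i = t/2 := by simp only [hctr, if_neg hji]; ring
      rw [h1, abs_of_nonneg (by positivity)]
  have hctr2 : ∀ j i, |(ctr j).2 i - x.2 i| ≤ t - t/M := by
    intro j i
    have hlt : ((j.2 i : ℕ) : ℝ) + 1 ≤ (M:ℝ) := by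
      exact_mod_cast Nat.succ_le_of_lt (j.2 i).isLt
    have hv : (ctr j).2 i - x.2 i = -t + (2*((j.2 i : ℕ):ℝ)+1)*(t/M) := by
      simp only [hctr]; ring
    have hnn : (0:ℝ) ≤ ((j.2 i : ℕ):ℝ) := by positivity
    rw [hv, abs_le]
    constructor
    · have h1 : t/M ≤ (2*((j.2 i:ℕ):ℝ)+1)*(t/M) := by
        apply le_mul_of_one_le_left (by positivity)
        linarith
      have h2 : t/M ≤ t := div_le_self ht.le (by exact_mod_cast hM)
      linarith
    · have h1 : (2*((j.2 i:ℕ):ℝ)+1)*(t/M) ≤ (2*((M:ℝ)-1)+1)*(t/M) := by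
        apply mul_le_mul_of_nonneg_right _ (by positivity)
        linarith
      have h2 : (2*((M:ℝ)-1)+1)*(t/M) = 2*t - t/M := by field_simp; ring
      linarith
  have hTx : ∀ j, T j ⊆ closedBall x t := by
    intro j w hw
    rw [mem_closedBall_iff' ht.le]
    refine ⟨fun i => ?_, fun i => ?_⟩
    · calc |w.1 i - x.1 i| ≤ |w.1 i - (ctr j).1 i| + |(ctr j).1 i - x.1 i| :=
          abs_sub_le _ _ _
        _ ≤ t/2 + t/2 := add_le_add (hw.1 i) (hctr1 j i)
        _ = t := by ring
    · calc |w.2 i - x.2 i| ≤ |w.2 i - (ctr j).2 i| + |(ctr j).2 i - x.2 i| :=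
          abs_sub_le _ _ _
        _ ≤ t/M + (t - t/M) := add_le_add (hw.2 i) (hctr2 j i)
        _ = t := by ring
  have hcover : closedBall x t ⊆
      ⋃ j ∈ (Finset.univ : Finset ((Fin N₀ → Fin 2) × (Fin N₁ → Fin M))), T j := by
    intro y hy
    obtain ⟨hy1, hy2⟩ := (mem_closedBall_iff' ht.le).1 hy
    have habs : ∀ i, |y.1 i - x.1 i| ≤ t := hy1
    set u : Fin N₀ → Fin 2 := fun i => if y.1 i - x.1 i < 0 then 0 else 1 with hu
    set a : Fin N₁ → Fin M := fun i =>
      ⟨min (M-1) ⌊(y.2 i - x.2 i + t) * M / (2*t)⌋₊,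
        lt_of_le_of_lt (min_le_left _ _) (by omega)⟩ with ha
    refine Set.mem_biUnion (Finset.mem_univ (u, a)) ⟨fun i => ?_, fun i => ?_⟩
    · have hb := abs_le.1 (habs i)
      by_cases hyi : y.1 i - x.1 i < 0
      · have hci : (ctr (u,a)).1 i = x.1 i + -(t/2) := by
          simp only [hctr, hu]
          rw [if_pos (by simpa using hyi)]
        rw [hci, abs_le]
        constructor <;> [linarith [hb.1]; linarith [hb.2]]
      · have hci : (ctr (u,a)).1 i = x.1 i + t/2 := by
          simp only [hctr, hu]
          rw [if_neg (by simpa using hyi)]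
        rw [hci, abs_le]
        constructor <;> [linarith [hb.1]; linarith [hb.2]]
    · have key := slab_coord ht hM (hy2 i)
      have hci : (ctr (u,a)).2 i =
          x.2 i + (-t + (2 * ((min (M-1) ⌊(y.2 i - x.2 i + t) * M / (2*t)⌋₊ : ℕ) : ℝ) + 1)
            * (t / M)) := by
        simp only [hctr, ha]
      have he : y.2 i - (ctr (u,a)).2 i =
          (y.2 i - x.2 i) - (-t + (2 * ((min (M-1) ⌊(y.2 i - x.2 i + t) * M / (2*t)⌋₊ : ℕ) : ℝ) + 1)
            * (t / M)) := by
        rw [hci]; ring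
      rw [he]
      exact key
  -- pigeonhole
  have hsumK : μ (K ∩ closedBall x t) ≤
      ∑ j : (Fin N₀ → Fin 2) × (Fin N₁ → Fin M), μ (K ∩ T j) := by
    have h1 : K ∩ closedBall x t ⊆ ⋃ j ∈ (Finset.univ :
        Finset ((Fin N₀ → Fin 2) × (Fin N₁ → Fin M))), (K ∩ T j) := by
      intro y hy
      rcases Set.mem_iUnion₂.1 (hcover hy.2) with ⟨j, hjmem, hjT⟩
      exact Set.mem_biUnion hjmem ⟨hy.1, hjT⟩
    calc μ (K ∩ closedBall x t) ≤ μ (⋃ j ∈ (Finset.univ :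
          Finset ((Fin N₀ → Fin 2) × (Fin N₁ → Fin M))), (K ∩ T j)) := measure_mono h1
      _ ≤ ∑ j ∈ (Finset.univ : Finset ((Fin N₀ → Fin 2) × (Fin N₁ → Fin M))),
            μ (K ∩ T j) := measure_biUnion_finset_le _ _
  obtain ⟨j₀, _, hj₀⟩ := Finset.exists_max_image Finset.univ
    (fun j : (Fin N₀ → Fin 2) × (Fin N₁ → Fin M) => μ (K ∩ T j)) Finset.univ_nonempty
  set card : ℕ := 2 ^ N₀ * M ^ N₁ with hcard
  have hcardeq : Fintype.card ((Fin N₀ → Fin 2) × (Fin N₁ → Fin M)) = card := by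
    simp [Fintype.card_fun, hcard]
  have hpig : μ (K ∩ closedBall x t) ≤ (card : ℝ≥0∞) * μ (K ∩ T j₀) := by
    calc μ (K ∩ closedBall x t) ≤ ∑ j, μ (K ∩ T j) := hsumK
      _ ≤ (Finset.univ : Finset ((Fin N₀ → Fin 2) × (Fin N₁ → Fin M))).card •
            μ (K ∩ T j₀) :=
          Finset.sum_le_card_nsmul _ _ _ (fun j _ => hj₀ j (Finset.mem_univ j))
      _ = (card : ℝ≥0∞) * μ (K ∩ T j₀) := by
          rw [Finset.card_univ, hcardeq, nsmul_eq_mul]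
  have hKT0 : μ (K ∩ T j₀) ≠ 0 := by
    intro h0
    rw [h0, mul_zero] at hpig
    have h2 : μ (closedBall x t) = 0 := by
      have h3 := hden.trans (mul_le_mul_right hpig 2)
      simpa using h3
    exact hb0 h2
  obtain ⟨z, hzK, hzT⟩ := nonempty_of_measure_ne_zero hKT0
  have hTz : T j₀ ⊆ Box z t (2*t/M) := by
    intro w hw
    refine ⟨fun i => ?_, fun i => ?_⟩
    · calc |w.1 i - z.1 i| ≤ |w.1 i - (ctr j₀).1 i| + |(ctr j₀).1 i - z.1 i| :=
          abs_sub_le _ _ _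
        _ ≤ t/2 + t/2 := add_le_add (hw.1 i) (by rw [abs_sub_comm]; exact hzT.1 i)
        _ ≤ t := by linarith
    · calc |w.2 i - z.2 i| ≤ |w.2 i - (ctr j₀).2 i| + |(ctr j₀).2 i - z.2 i| :=
          abs_sub_le _ _ _
        _ ≤ t/M + t/M := add_le_add (hw.2 i) (by rw [abs_sub_comm]; exact hzT.2 i)
        _ = 2*t/M := by ring
  have hzx : z ∈ closedBall x t := hTx j₀ hzT
  have hzball : closedBall z (3*t) ⊆ closedBall x (4*t) := by
    apply closedBall_subset_closedBall'
    have hdzx : dist z x ≤ t := mem_closedBall.1 hzx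
    linarith
  set X : ℝ≥0∞ := (2:ℝ≥0∞) ^ (2*(N₀+N₁)+N₀+2) * (M:ℝ≥0∞) ^ N₁ with hX
  have hXeq : X = 2 * D * card := by
    rw [hX, hD, hcard]; push_cast; ring
  have hX0 : X ≠ 0 := mul_ne_zero (pow_ne_zero _ (by norm_num))
    (pow_ne_zero _ (by exact_mod_cast hM.ne'))
  have hXtop : X ≠ ⊤ := ENNReal.mul_ne_top (ENNReal.pow_ne_top ENNReal.ofNat_ne_top)
    (ENNReal.pow_ne_top (ENNReal.natCast_ne_top M))
  have hchain : μ (closedBall z (3*t)) ≤ X * μ (Box z t (2*t/M)) := by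
    calc μ (closedBall z (3*t)) ≤ μ (closedBall x (4*t)) := measure_mono hzball
      _ ≤ D * μ (closedBall x t) := hdbl
      _ ≤ D * (2 * μ (K ∩ closedBall x t)) := mul_le_mul_right hden _
      _ ≤ D * (2 * ((card:ℝ≥0∞) * μ (K ∩ T j₀))) :=
          mul_le_mul_right (mul_le_mul_right hpig _) _
      _ = (2 * D * card) * μ (K ∩ T j₀) := by ring
      _ ≤ (2 * D * card) * μ (Box z t (2*t/M)) :=
          mul_le_mul_right (measure_mono (inter_subset_right.trans hTz)) _
      _ = X * μ (Box z t (2*t/M)) := by rw [hXeq]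
  refine ⟨z, hzK, t, ht, h3t, ?_, ?_⟩
  · calc X⁻¹ * μ (closedBall z (3*t)) ≤ X⁻¹ * (X * μ (Box z t (2*t/M))) :=
        mul_le_mul_right hchain _
      _ = μ (Box z t (2*t/M)) := by
          rw [← mul_assoc, ENNReal.inv_mul_cancel hX0 hXtop, one_mul]
  · exact lt_of_lt_of_le (pos_iff_ne_zero.2 hKT0)
      (measure_mono (inter_subset_right.trans hTz))

lemma abs_scale_iff {c a b r : ℝ} (hc : 0 < c) : |c*a - c*b| ≤ r ↔ |b - a| ≤ r / c := by
  rw [← mul_sub, abs_mul, abs_of_pos hc, abs_sub_comm a b]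
  exact (le_div_iff₀' hc).symm

end GoodRectAux

/-- The rectangle `E(x,r)`, which is `L²` times larger in the first `N₀` coordinates. -/
def Erect {N₀ N₁ : ℕ} (L : ℝ) (x : (Fin N₀ → ℝ) × (Fin N₁ → ℝ)) (r : ℝ) :
    Set ((Fin N₀ → ℝ) × (Fin N₁ → ℝ)) :=
  {y | (∀ i, |x.1 i - y.1 i| ≤ L ^ 2 * r / 2) ∧ (∀ i, |x.2 i - y.2 i| ≤ 2 * r)}

/-- The thin core `S(x,r)` of the rectangle `E(x,r)`. -/
def Score {N₀ N₁ : ℕ} (L σ : ℝ) (x : (Fin N₀ → ℝ) × (Fin N₁ → ℝ)) (r : ℝ) :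
    Set ((Fin N₀ → ℝ) × (Fin N₁ → ℝ)) :=
  {y | (∀ i, |x.1 i - y.1 i| ≤ L ^ 2 * r / 2 - L * r / 2) ∧ (∀ i, |x.2 i - y.2 i| ≤ 2 * σ * r)}

/-- A good rectangle: there exist `x ∈ K` and `0 < r ≤ r₀` such that
`μ(S(x,r)) ≥ σ^{N−N₀} (1/3) 2^{−2N−N₀−1} (1+1/6)^{−1} μ(E(x,r)) > 0`. -/
theorem stmt_5 (N₀ N₁ : ℕ) (hN₁ : 0 < N₁)
    (μ : Measure ((Fin N₀ → ℝ) × (Fin N₁ → ℝ))) [IsLocallyFiniteMeasure μ]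
    (K : Set ((Fin N₀ → ℝ) × (Fin N₁ → ℝ))) (hK : IsCompact K) (hμK : 0 < μ K)
    (r₀ L σ : ℝ) (hr₀ : 0 < r₀) (hL : 8 ≤ L) (hσ : σ ∈ Set.Ioo (0 : ℝ) (1 / 2)) :
    ∃ x ∈ K, ∃ r : ℝ, 0 < r ∧ r ≤ r₀ ∧
      ENNReal.ofReal (σ ^ N₁ * (1 / 3) * ((2 : ℝ) ^ (2 * (N₀ + N₁) + N₀ + 1))⁻¹ * (1 + 1 / 6)⁻¹)
          * μ (Erect L x r) ≤ μ (Score L σ x r) ∧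
      0 < μ (Score L σ x r) := by
  classical
  obtain ⟨hσ0, hσ2⟩ := hσ
  have hL0 : (0:ℝ) < L := by linarith
  have hσne : σ ≠ 0 := ne_of_gt hσ0
  set c₁ : ℝ := 2 / L^2 with hc₁
  have hc₁0 : 0 < c₁ := by positivity
  set φ : ((Fin N₀ → ℝ) × (Fin N₁ → ℝ)) ≃ₜ ((Fin N₀ → ℝ) × (Fin N₁ → ℝ)) :=
    (Homeomorph.piCongrRight fun _ : Fin N₀ =>
        Homeomorph.mulLeft₀ c₁ (ne_of_gt hc₁0)).prodCongr
      (Homeomorph.piCongrRight fun _ : Fin N₁ =>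
        Homeomorph.mulLeft₀ (2⁻¹ : ℝ) (by norm_num)) with hφ
  have hφ1 : ∀ p : (Fin N₀ → ℝ) × (Fin N₁ → ℝ), ∀ i, (φ p).1 i = c₁ * p.1 i :=
    fun p i => rfl
  have hφ2 : ∀ p : (Fin N₀ → ℝ) × (Fin N₁ → ℝ), ∀ i, (φ p).2 i = 2⁻¹ * p.2 i :=
    fun p i => rfl
  set μ' := Measure.map φ μ with hμ'
  have hφmeas : Measurable φ := φ.continuous.measurable
  have hmap : ∀ A : Set ((Fin N₀ → ℝ) × (Fin N₁ → ℝ)), MeasurableSet A →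
      μ' A = μ (φ ⁻¹' A) := fun A hA => Measure.map_apply hφmeas hA
  haveI : IsLocallyFiniteMeasure μ' := by
    constructor
    intro p
    refine ⟨φ.symm ⁻¹' (Metric.ball (φ.symm p) 1), ?_, ?_⟩
    · refine (Metric.isOpen_ball.preimage φ.symm.continuous).mem_nhds ?_
      simp only [Set.mem_preimage]
      exact Metric.mem_ball_self one_pos
    · rw [hmap _ ((Metric.isOpen_ball.preimage φ.symm.continuous).measurableSet)]
      have he : φ ⁻¹' (φ.symm ⁻¹' (Metric.ball (φ.symm p) 1)) = Metric.ball (φ.symm p) 1 := by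
        ext w; simp
      rw [he]
      exact lt_of_le_of_lt (measure_mono Metric.ball_subset_closedBall)
        (isCompact_closedBall _ _).measure_lt_top
  set K' := φ '' K with hK'
  have hK'c : IsCompact K' := hK.image φ.continuous
  have hK'meas : MeasurableSet K' := hK'c.isClosed.measurableSet
  have hμ'K' : 0 < μ' K' := by
    rw [hmap _ hK'meas, hK', Set.preimage_image_eq K φ.injective]
    exact hμK
  set M : ℕ := ⌈2/(3*σ)⌉₊ with hMdef
  have hM : 0 < M := Nat.ceil_pos.2 (by positivity)
  have hM2 : 2/(3*σ) ≤ (M:ℝ) := Nat.le_ceil _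
  have hMr : (0:ℝ) < M := by exact_mod_cast hM
  have hMσ : (M:ℝ) * σ ≤ 1 := by
    have haσ : (2/(3*σ))*σ = 2/3 := by field_simp
    rcases le_or_gt σ (1/3) with h | h
    · have hc : (M:ℝ) < 2/(3*σ) + 1 := Nat.ceil_lt_add_one (by positivity)
      nlinarith [mul_lt_mul_of_pos_right hc hσ0]
    · have hle : 2/(3*σ) ≤ ((2:ℕ):ℝ) := by
        push_cast
        rw [div_le_iff₀ (by positivity)]
        nlinarith
      have h2 : M ≤ 2 := Nat.ceil_le.2 hle
      have h2' : (M:ℝ) ≤ 2 := by exact_mod_cast h2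
      nlinarith
  obtain ⟨z, hzK', t, ht, h3t, hmain, hpos⟩ :=
    GoodRectAux.master μ' K' hK'c hμ'K' r₀ hr₀ M hM
  obtain ⟨x, hxK, hφx⟩ := hzK'
  have hdiv1 : (3*t) / c₁ = L^2*(3*t)/2 := by rw [hc₁]; field_simp
  have hdiv2 : (3*t) / (2⁻¹:ℝ) = 2*(3*t) := by norm_num; ring
  have hE : Erect L x (3*t) = φ ⁻¹' (Metric.closedBall z (3*t)) := by
    ext y
    rw [Set.mem_preimage, ← hφx,
      GoodRectAux.mem_closedBall_iff' (by positivity : (0:ℝ) ≤ 3*t)]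
    simp only [hφ1, hφ2, Erect, Set.mem_setOf_eq]
    exact ((and_congr
      (forall_congr' fun i => by rw [GoodRectAux.abs_scale_iff hc₁0, hdiv1])
      (forall_congr' fun i => by
        rw [GoodRectAux.abs_scale_iff (by norm_num : (0:ℝ) < 2⁻¹), hdiv2]))).symm
  have hSsub : φ ⁻¹' (GoodRectAux.Box z t (2*t/M)) ⊆ Score L σ x (3*t) := by
    intro y hy
    rw [Set.mem_preimage, ← hφx] at hy
    obtain ⟨h1, h2⟩ := hy
    constructor
    · intro i
      have hh := h1 i
      simp only [hφ1] at hh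
      rw [GoodRectAux.abs_scale_iff hc₁0] at hh
      have ht1 : t / c₁ = L^2*t/2 := by rw [hc₁]; field_simp
      rw [ht1] at hh
      have h2L : 3*L ≤ 2*L^2 := by nlinarith
      have hgeo : L^2*t/2 ≤ L^2*(3*t)/2 - L*(3*t)/2 := by
        nlinarith [mul_le_mul_of_nonneg_right h2L ht.le]
      linarith
    · intro i
      have hh := h2 i
      simp only [hφ2] at hh
      rw [GoodRectAux.abs_scale_iff (by norm_num : (0:ℝ) < 2⁻¹)] at hh
      have ht2 : (2*t/(M:ℝ))/(2⁻¹:ℝ) = 4*t/M := by field_simp; ring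
      rw [ht2] at hh
      have e : 2/(3*σ)*(3*σ) = 2 := div_mul_cancel₀ _ (by positivity)
      have hfin : 4*t/(M:ℝ) ≤ 2*σ*(3*t) := by
        rw [div_le_iff₀ hMr]
        nlinarith [mul_le_mul_of_nonneg_left hM2 (by positivity : (0:ℝ) ≤ 3*σ*t)]
      linarith
  have hmapE : μ (Erect L x (3*t)) = μ' (Metric.closedBall z (3*t)) := by
    rw [hmap _ measurableSet_closedBall, hE]
  have hmapS : μ' (GoodRectAux.Box z t (2*t/M)) ≤ μ (Score L σ x (3*t)) := by
    rw [hmap _ (GoodRectAux.measurableSet_box _ _ _)]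
    exact measure_mono hSsub
  have hconst : ENNReal.ofReal
      (σ ^ N₁ * (1 / 3) * ((2 : ℝ) ^ (2 * (N₀ + N₁) + N₀ + 1))⁻¹ * (1 + 1 / 6)⁻¹)
      ≤ ((2:ℝ≥0∞) ^ (2*(N₀+N₁)+N₀+2) * (M:ℝ≥0∞) ^ N₁)⁻¹ := by
    rw [ENNReal.le_inv_iff_mul_le]
    have hc2 : ((2:ℝ≥0∞)^(2*(N₀+N₁)+N₀+2) * (M:ℝ≥0∞)^N₁)
        = ENNReal.ofReal ((2:ℝ)^(2*(N₀+N₁)+N₀+2) * (M:ℝ)^N₁) := by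
      rw [ENNReal.ofReal_mul (by positivity), ENNReal.ofReal_pow (by norm_num),
        ENNReal.ofReal_pow (Nat.cast_nonneg M), ENNReal.ofReal_natCast,
        ENNReal.ofReal_ofNat]
    rw [hc2, ← ENNReal.ofReal_mul (by positivity),
      show (1:ℝ≥0∞) = ENNReal.ofReal 1 by simp]
    apply ENNReal.ofReal_le_ofReal
    have hσM : (σ*(M:ℝ))^N₁ ≤ 1 :=
      pow_le_one₀ (mul_nonneg hσ0.le (Nat.cast_nonneg M)) (by rw [mul_comm]; exact hMσ)
    have hpow : (2:ℝ)^(2*(N₀+N₁)+N₀+2) = 2 * (2:ℝ)^(2*(N₀+N₁)+N₀+1) := by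
      rw [pow_succ]; ring
    rw [hpow]
    obtain ⟨P, hPdef⟩ : ∃ P : ℝ, (2:ℝ)^(2*(N₀+N₁)+N₀+1) = P := ⟨_, rfl⟩
    have hP0 : (0:ℝ) < P := hPdef ▸ (by positivity)
    rw [hPdef]
    have hPne : P ≠ 0 := ne_of_gt hP0
    have e : σ ^ N₁ * (1 / 3) * P⁻¹ * (1 + 1 / 6)⁻¹ *
        (2 * P * (M:ℝ)^N₁) = (σ*(M:ℝ))^N₁ * (4/7) := by
      calc σ ^ N₁ * (1 / 3) * P⁻¹ * (1 + 1 / 6)⁻¹ * (2 * P * (M:ℝ)^N₁)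
          = (σ^N₁ * (M:ℝ)^N₁) * ((1/3) * ((1+1/6:ℝ))⁻¹ * 2) * (P⁻¹ * P) := by ring
        _ = (σ^N₁ * (M:ℝ)^N₁) * ((1/3) * ((1+1/6:ℝ))⁻¹ * 2) * 1 := by
            rw [inv_mul_cancel₀ hPne]
        _ = (σ*(M:ℝ))^N₁ * (4/7) := by rw [mul_pow]; norm_num
    rw [e]
    exact le_trans (mul_le_mul_of_nonneg_right hσM (by norm_num)) (by norm_num)
  refine ⟨x, hxK, 3*t, by positivity, h3t, ?_, ?_⟩
  · rw [hmapE]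
    exact le_trans (mul_le_mul_left hconst _) (le_trans hmain hmapS)
  · exact lt_of_lt_of_le hpos hmapS
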